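/- Suppose a real sequence (a_t)_{t≥0} satisfies a_{t+1} = a_t + c/(1 + b e^{a_t}) for some 0 ≤ c ≤ 1 and b ≥ 0. Let x(t) be the unique solution of the ODE x'(t) = c/(1 + b e^{x(t)}) with x(0) = a₀, equivalently x(t) + b e^{x(t)} = c t + a₀ + b e^{a₀}. Then x(t) ≤ a_t ≤ x(t) + c/(1 + b e^{a₀}) for all integers t ≥ 0. -/
import Mathlib


theorem stmt5 (a : ℕ → ℝ) (b c : ℝ) (hb : 0 ≤ b) (hc0 : 0 ≤ c) (hc1 : c ≤ 1)
    (hrec : ∀ t : ℕ, a (t + 1) = a t + c / (1 + b * Real.exp (a t)))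
    (x : ℝ → ℝ)
    (hx : ∀ t : ℝ, 0 ≤ t →
      x t + b * Real.exp (x t) = c * t + a 0 + b * Real.exp (a 0)) :
    ∀ t : ℕ, x t ≤ a t ∧ a t ≤ x t + c / (1 + b * Real.exp (a 0)) := by
  set F : ℝ → ℝ := fun y => y + b * Real.exp y with hF
  have hpos : ∀ y : ℝ, (0:ℝ) < 1 + b * Real.exp y := by
    intro y; nlinarith [Real.exp_pos y, mul_nonneg hb (Real.exp_pos y).le]
  have hFmono : StrictMono F := by
    intro u v huv
    have h1 : Real.exp u ≤ Real.exp v := Real.exp_le_exp.mpr huv.le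
    have h2 : b * Real.exp u ≤ b * Real.exp v := mul_le_mul_of_nonneg_left h1 hb
    simp only [hF]; linarith
  set d : ℝ := c / (1 + b * Real.exp (a 0)) with hd
  have hdnn : 0 ≤ d := div_nonneg hc0 (hpos (a 0)).le
  -- a is increasing from a 0
  have hge : ∀ t : ℕ, a 0 ≤ a t := by
    intro t
    induction t with
    | zero => exact le_refl _
    | succ n ih =>
      have := hrec n
      have hδ : 0 ≤ c / (1 + b * Real.exp (a n)) := div_nonneg hc0 (hpos (a n)).le
      linarith [this, hδ]
  have hδle : ∀ t : ℕ, c / (1 + b * Real.exp (a t)) ≤ d := by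
    intro t
    rw [hd]
    apply div_le_div_of_nonneg_left hc0 (hpos (a 0))
    have := Real.exp_le_exp.mpr (hge t)
    nlinarith
  -- lower bound: c*t + F(a0) ≤ F(a t)
  have hlow : ∀ t : ℕ, c * t + F (a 0) ≤ F (a t) := by
    intro t
    induction t with
    | zero => simp
    | succ n ih =>
      set δ : ℝ := c / (1 + b * Real.exp (a n)) with hδdef
      have hδnn : 0 ≤ δ := div_nonneg hc0 (hpos (a n)).le
      have hmul : δ * (1 + b * Real.exp (a n)) = c := div_mul_cancel₀ c (hpos (a n)).ne'
      have hexp : 1 + δ ≤ Real.exp δ := by linarith [Real.add_one_le_exp δ]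
      have hkey : F (a n) + c ≤ F (a (n + 1)) := by
        rw [hrec n, ← hδdef]
        simp only [hF]
        rw [Real.exp_add]
        have he := Real.exp_pos (a n)
        nlinarith [mul_le_mul_of_nonneg_left hexp (mul_nonneg hb he.le)]
      push_cast
      linarith
  -- upper bound: F(a t - d) ≤ c*t + F(a0)
  have hup : ∀ t : ℕ, F (a t - d) ≤ c * t + F (a 0) := by
    intro t
    induction t with
    | zero =>
      simp only [Nat.cast_zero, mul_zero, zero_add]
      exact (hFmono.le_iff_le.mpr (by linarith))
    | succ n ih =>
      set δ : ℝ := c / (1 + b * Real.exp (a n)) with hδdef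
      have hδnn : 0 ≤ δ := div_nonneg hc0 (hpos (a n)).le
      have hmul : δ * (1 + b * Real.exp (a n)) = c := div_mul_cancel₀ c (hpos (a n)).ne'
      have hδd : δ ≤ d := hδle n
      -- exp δ - 1 ≤ δ * exp δ
      have hexp : Real.exp δ - 1 ≤ δ * Real.exp δ := by
        have h := Real.add_one_le_exp (-δ)
        have h1 : Real.exp (-δ) * Real.exp δ = 1 := by rw [← Real.exp_add]; simp
        nlinarith [mul_le_mul_of_nonneg_right h (Real.exp_pos δ).le]
      have hkey : F (a (n + 1) - d) ≤ F (a n - d) + c := by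
        rw [hrec n, ← hδdef]
        simp only [hF]
        have heq : a n + δ - d = (a n - d) + δ := by ring
        rw [heq, Real.exp_add]
        -- need: δ + b * exp(a n - d) * (exp δ - 1) ≤ c
        have h1 : Real.exp (a n - d) ≤ Real.exp (a n - δ) :=
          Real.exp_le_exp.mpr (by linarith)
        have h2 : Real.exp (a n - δ) * Real.exp δ = Real.exp (a n) := by
          rw [← Real.exp_add]; ring_nf
        have he := Real.exp_pos (a n - d)
        have he2 := Real.exp_pos δ
        have H1 : b * Real.exp (a n - d) * (Real.exp δ - 1) ≤
            b * Real.exp (a n - d) * (δ * Real.exp δ) :=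
          mul_le_mul_of_nonneg_left hexp (mul_nonneg hb he.le)
        have H2 : b * Real.exp (a n - d) * (δ * Real.exp δ) ≤
            b * Real.exp (a n - δ) * (δ * Real.exp δ) := by
          have := mul_le_mul_of_nonneg_left h1 hb
          exact mul_le_mul_of_nonneg_right this (mul_nonneg hδnn he2.le)
        have H3 : b * Real.exp (a n - δ) * (δ * Real.exp δ) =
            δ * (b * Real.exp (a n)) := by
          rw [show b * Real.exp (a n - δ) * (δ * Real.exp δ) =
            δ * (b * (Real.exp (a n - δ) * Real.exp δ)) from by ring, h2]
        nlinarith [H1, H2, H3]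
      push_cast
      linarith
  intro t
  have hxt := hx t (Nat.cast_nonneg t)
  have hFx : F (x t) = c * t + F (a 0) := by simp only [hF]; linarith
  constructor
  · have : F (x t) ≤ F (a t) := by rw [hFx]; exact hlow t
    exact hFmono.le_iff_le.mp this
  · have : F (a t - d) ≤ F (x t) := by rw [hFx]; exact hup t
    have := hFmono.le_iff_le.mp this
    rw [hd] at *
    linarith
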